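/- Let X be an upper triangular block matrix on ℂ^{N₁}⊗ℂ^{N₂} with (i,j) block S_{ij}X_i (S_{ii} = 𝟙, S_{ij} = 0 for i > j), where all S_{ij} (i < j) are normal N₂×N₂ matrices satisfying [S_{kj}, S_{ki}*] = 0 for all k ≤ i ≤ j. Then ρ = X*X is separable on ℂ^{N₁}⊗ℂ^{N₂}. -/

import Mathlib

open Matrix Kronecker ComplexOrder

noncomputable section

theorem exists_subordinate_basis {ι : Type*} [DecidableEq ι] {E : Type*} [NormedAddCommGroup E]
    [InnerProductSpace ℂ E] [FiniteDimensional ℂ E] {n : ℕ}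
    (hn : Module.finrank ℂ E = n) {V : ι → Submodule ℂ E}
    (hV : DirectSum.IsInternal V)
    (hV' : OrthogonalFamily ℂ (fun i => ↥(V i)) (fun i => (V i).subtypeₗᵢ)) :
    ∃ (b : OrthonormalBasis (Fin n) ℂ E) (ind : Fin n → ι), ∀ a, b a ∈ V (ind a) := by
  classical
  have hind : iSupIndep V := hV.submodule_iSupIndep
  have hfin : {i | V i ≠ ⊥}.Finite := WellFoundedGT.finite_ne_bot_of_iSupIndep hind
  haveI : Fintype {i : ι // V i ≠ ⊥} := hfin.fintype
  have hV2 : DirectSum.IsInternal (fun i : {i : ι // V i ≠ ⊥} => V i.1) := by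
    rw [DirectSum.isInternal_submodule_iff_iSupIndep_and_iSup_eq_top]
    exact ⟨hind.comp Subtype.coe_injective, by rw [iSup_ne_bot_subtype]; exact hV.submodule_iSup_eq_top⟩
  have hV2' : OrthogonalFamily ℂ (fun i : {i : ι // V i ≠ ⊥} => ↥(V i.1))
      (fun i => (V i.1).subtypeₗᵢ) := hV'.comp Subtype.coe_injective
  exact ⟨hV2.subordinateOrthonormalBasis hn hV2',
    fun a => (hV2.subordinateOrthonormalBasisIndex hn a hV2').1,
    fun a => hV2.subordinateOrthonormalBasis_subordinate hn a hV2'⟩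

/-- Simultaneous diagonalization of a commuting family of Hermitian matrices. -/
theorem herm_diag {n : ℕ} {m : Type*}
    (T : m → Matrix (Fin n) (Fin n) ℂ)
    (hherm : ∀ i, (T i).IsHermitian)
    (hcomm : ∀ i j, T i * T j = T j * T i) :
    ∃ (U : Matrix (Fin n) (Fin n) ℂ) (d : m → Fin n → ℂ),
      Uᴴ * U = 1 ∧ (∀ i a, star (d i a) = d i a) ∧
      ∀ i, T i = U * Matrix.diagonal (d i) * Uᴴ := by
  classical
  set M : m → Module.End ℂ (EuclideanSpace ℂ (Fin n)) := fun i => Matrix.toEuclideanLin (T i) with hM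
  have hmul : ∀ A B : Matrix (Fin n) (Fin n) ℂ,
      Matrix.toEuclideanLin (A * B) = Matrix.toEuclideanLin A ∘ₗ Matrix.toEuclideanLin B := by
    intro A B
    refine LinearMap.ext fun v => ?_
    simp [Matrix.toEuclideanLin_apply, Matrix.mulVec_mulVec]
  have hsymm : ∀ i, (M i).IsSymmetric := fun i =>
    (Matrix.isHermitian_iff_isSymmetric).mp (hherm i)
  have hC : Pairwise (Function.onFun Commute M) := by
    intro i j _
    show M i * M j = M j * M i
    simp only [hM, Module.End.mul_eq_comp, ← hmul, hcomm i j]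
  have hV := LinearMap.IsSymmetric.LinearMap.IsSymmetric.directSum_isInternal_of_pairwise_commute
    (n := m) (T := M) hsymm hC
  have horth := LinearMap.IsSymmetric.orthogonalFamily_iInf_eigenspaces hsymm
  have hn : Module.finrank ℂ (EuclideanSpace ℂ (Fin n)) = n := finrank_euclideanSpace_fin
  obtain ⟨b, ind, hmem0⟩ := exists_subordinate_basis hn hV horth
  set χ : Fin n → m → ℂ := ind with hχ
  have hmem : ∀ a, (b a) ∈ ⨅ j, Module.End.eigenspace (M j) (χ a j) := hmem0
  have heig : ∀ i a, M i (b a) = χ a i • b a := by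
    intro i a
    have := (Submodule.mem_iInf _).mp (hmem a) i
    rwa [Module.End.mem_eigenspace_iff] at this
  have hne : ∀ a, b a ≠ 0 := fun a => b.orthonormal.ne_zero a
  have hreal : ∀ i a, star (χ a i) = χ a i := by
    intro i a
    exact (hsymm i).conj_eigenvalue_eq_self
      (Module.End.hasEigenvalue_of_hasEigenvector ⟨(Module.End.mem_eigenspace_iff).mpr (heig i a), hne a⟩)
  set U : Matrix (Fin n) (Fin n) ℂ := fun p a => b a p with hU
  have hUU : Uᴴ * U = 1 := by
    ext a a'
    have h1 := b.orthonormal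
    rw [orthonormal_iff_ite] at h1
    have h2 := h1 a a'
    rw [PiLp.inner_apply] at h2
    rw [Matrix.mul_apply]
    simp only [Matrix.conjTranspose_apply]
    simp only [Matrix.mul_apply, Matrix.conjTranspose_apply, hU, Matrix.one_apply]
    simpa [RCLike.inner_apply, mul_comm] using h2
  refine ⟨U, fun i a => χ a i, hUU, fun i a => hreal i a, fun i => ?_⟩
  have hcol : T i * U = U * Matrix.diagonal (fun a => χ a i) := by
    ext p a
    have h := heig i a
    have h2 : T i *ᵥ (fun q => b a q) = χ a i • (fun q => b a q) := by
      have := congrArg (WithLp.equiv 2 (Fin n → ℂ)) h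
      simpa [Matrix.toEuclideanLin_apply, hM] using this
    have h3 := congrFun h2 p
    rw [Matrix.mul_diagonal, Matrix.mul_apply]
    simpa [Matrix.mulVec, dotProduct, mul_comm] using h3
  have hUUc : U * Uᴴ = 1 := mul_eq_one_comm.mp hUU
  calc T i = T i * (U * Uᴴ) := by rw [hUUc, Matrix.mul_one]
    _ = (T i * U) * Uᴴ := by rw [Matrix.mul_assoc]
    _ = U * Matrix.diagonal (fun a => χ a i) * Uᴴ := by rw [hcol]


variable {n : ℕ}

private lemma smul_commute_left {c : ℂ} {a b : Matrix (Fin n) (Fin n) ℂ}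
    (h : Commute a b) : Commute (c • a) b := by
  unfold Commute SemiconjBy
  rw [Matrix.smul_mul, h.eq, Matrix.mul_smul]

private lemma smul_commute_right {c : ℂ} {a b : Matrix (Fin n) (Fin n) ℂ}
    (h : Commute a b) : Commute a (c • b) :=
  (smul_commute_left h.symm).symm

private lemma diag_combine (U A B N : Matrix (Fin n) (Fin n) ℂ) (p q : Fin n → ℂ)
    (hA : A = U * Matrix.diagonal p * Uᴴ) (hB : B = U * Matrix.diagonal q * Uᴴ)
    (hN : N = (2⁻¹ : ℂ) • (A + Complex.I • B)) :
    N = U * Matrix.diagonal (fun a => (2⁻¹ : ℂ) * (p a + Complex.I * q a)) * Uᴴ := by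
  have hd : Matrix.diagonal (fun a => (2⁻¹ : ℂ) * (p a + Complex.I * q a))
      = (2⁻¹ : ℂ) • (Matrix.diagonal p + Complex.I • Matrix.diagonal q) := by
    ext a b
    by_cases hab : a = b <;> simp [Matrix.diagonal_apply, hab]
  rw [hN, hA, hB, hd]
  simp only [Matrix.smul_mul, Matrix.mul_smul, Matrix.add_mul, Matrix.mul_add]

/-- Decomposition of the matrix into Hermitian combination. -/
private lemma herm_split (N : Matrix (Fin n) (Fin n) ℂ) :
    N = (2⁻¹ : ℂ) • ((N + Nᴴ) + Complex.I • (Complex.I • (Nᴴ - N))) := by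
  rw [smul_smul, Complex.I_mul_I]
  module

private lemma herm_parts (N : Matrix (Fin n) (Fin n) ℂ) :
    (N + Nᴴ).IsHermitian ∧ (Complex.I • (Nᴴ - N)).IsHermitian := by
  constructor
  · unfold Matrix.IsHermitian
    rw [Matrix.conjTranspose_add, Matrix.conjTranspose_conjTranspose, add_comm]
  · unfold Matrix.IsHermitian
    rw [Matrix.conjTranspose_smul, Matrix.conjTranspose_sub, Matrix.conjTranspose_conjTranspose]
    rw [Complex.star_def, Complex.conj_I, neg_smul, ← smul_neg, neg_sub]


private lemma normal_commute_family {m : Type*} (T : m → Matrix (Fin n) (Fin n) ℂ)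
    (hc : ∀ i j, T i * (T j)ᴴ = (T j)ᴴ * T i) :
    ∃ (U : Matrix (Fin n) (Fin n) ℂ) (d : m → Fin n → ℂ),
      Uᴴ * U = 1 ∧ ∀ i, T i = U * Matrix.diagonal (d i) * Uᴴ := by
  classical
  -- Step 1: diagonalize each normal matrix individually (for Fuglede).
  have hsingle : ∀ (N : Matrix (Fin n) (Fin n) ℂ), N * Nᴴ = Nᴴ * N →
      ∃ (U : Matrix (Fin n) (Fin n) ℂ) (e : Fin n → ℂ),
        Uᴴ * U = 1 ∧ N = U * Matrix.diagonal e * Uᴴ := by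
    intro N hN
    obtain ⟨h1, h2⟩ := herm_parts N
    set G : Bool → Matrix (Fin n) (Fin n) ℂ :=
      fun b => bif b then N + Nᴴ else Complex.I • (Nᴴ - N) with hG
    have hGh : ∀ b, (G b).IsHermitian := by intro b; cases b <;> simpa [hG] using (by assumption)
    have hGc : ∀ b b', G b * G b' = G b' * G b := by
      have key : Commute (N + Nᴴ) (Complex.I • (Nᴴ - N)) := by
        apply smul_commute_right
        show _ = _
        simp only [mul_sub, sub_mul, mul_add, add_mul, hN, Matrix.conjTranspose_mul]
        abel_nf
      intro b b'
      cases b <;> cases b'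
      · rfl
      · exact key.symm.eq
      · exact key.eq
      · rfl
    obtain ⟨U, d, hUU, _, hrep⟩ := herm_diag G hGh hGc
    refine ⟨U, fun a => (2⁻¹ : ℂ) * (d true a + Complex.I * d false a), hUU, ?_⟩
    exact diag_combine U (G true) (G false) N (fun a => d true a) (fun a => d false a)
      (hrep true) (hrep false) (by simpa [hG] using herm_split N)
  -- Step 2: Fuglede: T i commutes with T j.
  have hfug : ∀ i j, T i * T j = T j * T i := by
    intro i j
    obtain ⟨U, e, hUU, hrep⟩ := hsingle (T j) (hc j j)
    have hUUc : U * Uᴴ = 1 := mul_eq_one_comm.mp hUU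
    have cmul : ∀ P Q : Matrix (Fin n) (Fin n) ℂ,
        (Uᴴ * P * U) * (Uᴴ * Q * U) = Uᴴ * (P * Q) * U := by
      intro P Q
      calc (Uᴴ * P * U) * (Uᴴ * Q * U) = Uᴴ * (P * ((U * Uᴴ) * (Q * U))) := by
            simp only [Matrix.mul_assoc]
        _ = Uᴴ * (P * Q) * U := by rw [hUUc, Matrix.one_mul]; simp only [Matrix.mul_assoc]
    have hcN : Uᴴ * T j * U = Matrix.diagonal e := by
      rw [hrep]
      calc Uᴴ * (U * Matrix.diagonal e * Uᴴ) * U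
          = (Uᴴ * U) * Matrix.diagonal e * (Uᴴ * U) := by simp only [Matrix.mul_assoc]
        _ = Matrix.diagonal e := by rw [hUU]; simp
    have hcNh : Uᴴ * (T j)ᴴ * U = Matrix.diagonal (fun a => star (e a)) := by
      have : (T j)ᴴ = U * Matrix.diagonal (fun a => star (e a)) * Uᴴ := by
        rw [hrep]
        simp only [Matrix.conjTranspose_mul, Matrix.conjTranspose_conjTranspose,
          Matrix.diagonal_conjTranspose]
        simp [Matrix.mul_assoc, star, Pi.star_def]
      rw [this]
      calc Uᴴ * (U * Matrix.diagonal (fun a => star (e a)) * Uᴴ) * U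
          = (Uᴴ * U) * Matrix.diagonal (fun a => star (e a)) * (Uᴴ * U) := by
            simp only [Matrix.mul_assoc]
        _ = _ := by rw [hUU]; simp
    set W : Matrix (Fin n) (Fin n) ℂ := Uᴴ * T i * U with hW
    have hWs : W * Matrix.diagonal (fun a => star (e a))
        = Matrix.diagonal (fun a => star (e a)) * W := by
      have h2 : (Uᴴ * T i * U) * (Uᴴ * (T j)ᴴ * U) = (Uᴴ * (T j)ᴴ * U) * (Uᴴ * T i * U) := by
        rw [cmul, cmul, hc i j]
      rwa [hcNh] at h2
    have hWD : W * Matrix.diagonal e = Matrix.diagonal e * W := by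
      ext a c
      rw [Matrix.mul_diagonal, Matrix.diagonal_mul]
      have h3 := congrFun (congrFun hWs a) c
      rw [Matrix.mul_diagonal, Matrix.diagonal_mul] at h3
      by_cases hw : W a c = 0
      · simp [hw]
      · have h4 : star (e c) = star (e a) := by
          have := h3
          rw [mul_comm (star (e a)) (W a c)] at this
          exact mul_left_cancel₀ hw this
        have h5 : e c = e a := star_injective h4
        rw [h5, mul_comm]
    -- undo conjugation
    have hB : ∀ P : Matrix (Fin n) (Fin n) ℂ, U * (Uᴴ * P * U) * Uᴴ = P := by
      intro P
      calc U * (Uᴴ * P * U) * Uᴴ = (U * Uᴴ) * P * (U * Uᴴ) := by simp only [Matrix.mul_assoc]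
        _ = P := by rw [hUUc]; simp
    have dmul : ∀ P Q : Matrix (Fin n) (Fin n) ℂ,
        (U * P * Uᴴ) * (U * Q * Uᴴ) = U * (P * Q) * Uᴴ := by
      intro P Q
      calc (U * P * Uᴴ) * (U * Q * Uᴴ) = U * (P * ((Uᴴ * U) * (Q * Uᴴ))) := by
            simp only [Matrix.mul_assoc]
        _ = U * (P * Q) * Uᴴ := by rw [hUU, Matrix.one_mul]; simp only [Matrix.mul_assoc]
    have hTi : T i = U * W * Uᴴ := (hB (T i)).symm
    calc T i * T j = (U * W * Uᴴ) * (U * Matrix.diagonal e * Uᴴ) := by rw [← hTi, ← hrep]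
      _ = U * (W * Matrix.diagonal e) * Uᴴ := dmul _ _
      _ = U * (Matrix.diagonal e * W) * Uᴴ := by rw [hWD]
      _ = (U * Matrix.diagonal e * Uᴴ) * (U * W * Uᴴ) := (dmul _ _).symm
      _ = T j * T i := by rw [← hrep, ← hTi]
  -- Step 3: the full Hermitian family
  have hstar : ∀ i j, (T i)ᴴ * (T j)ᴴ = (T j)ᴴ * (T i)ᴴ := by
    intro i j
    have h := congrArg Matrix.conjTranspose (hfug j i)
    simpa [Matrix.conjTranspose_mul] using h
  set G : m ⊕ m → Matrix (Fin n) (Fin n) ℂ :=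
    Sum.elim (fun i => T i + (T i)ᴴ) (fun i => Complex.I • ((T i)ᴴ - T i)) with hGdef
  have hGh : ∀ x, (G x).IsHermitian := by
    rintro (i | i)
    · exact (herm_parts (T i)).1
    · exact (herm_parts (T i)).2
  have hGc : ∀ x y, G x * G y = G y * G x := by
    have c1 : ∀ i j, Commute (T i) (T j) := fun i j => hfug i j
    have c2 : ∀ i j, Commute (T i) ((T j)ᴴ) := fun i j => hc i j
    have c3 : ∀ i j, Commute ((T i)ᴴ) (T j) := fun i j => (hc j i).symm
    have c4 : ∀ i j, Commute ((T i)ᴴ) ((T j)ᴴ) := fun i j => hstar i j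
    rintro (i | i) (j | j)
    · exact (((c1 i j).add_right (c2 i j)).add_left ((c3 i j).add_right (c4 i j))).eq
    · exact (smul_commute_right (((c2 i j).sub_right (c1 i j)).add_left
        (((c4 i j).sub_right (c3 i j))))).eq
    · exact (smul_commute_left (((c3 i j).add_right (c4 i j)).sub_left
        ((c1 i j).add_right (c2 i j)))).eq
    · exact (smul_commute_left (smul_commute_right
        (((c4 i j).sub_right (c3 i j)).sub_left ((c2 i j).sub_right (c1 i j))))).eq
  obtain ⟨U, d, hUU, _, hrep⟩ := herm_diag G hGh hGc
  refine ⟨U, fun i a => (2⁻¹ : ℂ) * (d (Sum.inl i) a + Complex.I * d (Sum.inr i) a), hUU, fun i => ?_⟩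
  exact diag_combine U (G (Sum.inl i)) (G (Sum.inr i)) (T i) (d (Sum.inl i)) (d (Sum.inr i))
    (hrep (Sum.inl i)) (hrep (Sum.inr i)) (by simpa [hGdef] using herm_split (T i))

end

private lemma psd_outer {k : ℕ} (f : Fin k → ℂ) :
    (Matrix.of fun i j => star (f i) * f j : Matrix (Fin k) (Fin k) ℂ).PosSemidef := by
  have h : (Matrix.of fun i j => star (f i) * f j : Matrix (Fin k) (Fin k) ℂ)
      = (Matrix.replicateRow Unit f)ᴴ * Matrix.replicateRow Unit f := by
    ext i j
    simp [Matrix.mul_apply, Matrix.replicateRow_apply, Matrix.conjTranspose_apply]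
  rw [h]
  exact Matrix.posSemidef_conjTranspose_mul_self _

/-- Separability on ℂ^{N₁}⊗ℂ^{N₂}. -/
def SepBi {N₁ N₂ : ℕ}
    (ρ : Matrix (Fin N₁ × Fin N₂) (Fin N₁ × Fin N₂) ℂ) : Prop :=
  ∃ (n : ℕ) (A : Fin n → Matrix (Fin N₁) (Fin N₁) ℂ)
    (B : Fin n → Matrix (Fin N₂) (Fin N₂) ℂ),
    (∀ i, (A i).PosSemidef) ∧ (∀ i, (B i).PosSemidef) ∧
    ρ = ∑ i, A i ⊗ₖ B i

theorem stmt16 {N₁ N₂ : ℕ}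
    (S : Fin N₁ → Fin N₁ → Matrix (Fin N₂) (Fin N₂) ℂ)
    (Y : Fin N₁ → Matrix (Fin N₂) (Fin N₂) ℂ)
    (hdiag : ∀ i, S i i = 1)
    (hlow : ∀ i j, j < i → S i j = 0)
    (hnormal : ∀ i j, i < j → S i j * (S i j)ᴴ = (S i j)ᴴ * S i j)
    (hcomm : ∀ k i j, k ≤ i → i ≤ j →
      S k j * (S k i)ᴴ = (S k i)ᴴ * S k j) :
    letI X : Matrix (Fin N₁ × Fin N₂) (Fin N₁ × Fin N₂) ℂ :=
      fun p q => (S p.1 q.1 * Y p.1) p.2 q.2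
    SepBi (Xᴴ * X) := by
  set X : Matrix (Fin N₁ × Fin N₂) (Fin N₁ × Fin N₂) ℂ :=
    fun p q => (S p.1 q.1 * Y p.1) p.2 q.2 with hXdef
  -- the commutation hypothesis needed for simultaneous diagonalization
  have hfam : ∀ k i j, S k i * (S k j)ᴴ = (S k j)ᴴ * S k i := by
    intro k i j
    rcases lt_or_ge i k with hik | hik
    · rw [hlow k i hik]; simp
    · rcases lt_or_ge j k with hjk | hjk
      · rw [hlow k j hjk]; simp
      · rcases le_total i j with hij | hij
        · have h := congrArg Matrix.conjTranspose (hcomm k i j hik hij)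
          simpa [Matrix.conjTranspose_mul] using h
        · exact hcomm k j i hjk hij
  have hch := fun k => normal_commute_family (fun i => S k i) (hfam k)
  choose U d hUU hrep using hch
  set M : Fin N₁ → Matrix (Fin N₂) (Fin N₂) ℂ := fun k => (U k)ᴴ * Y k with hM
  have key : ∀ k i j, (S k i * Y k)ᴴ * (S k j * Y k)
      = (M k)ᴴ * Matrix.diagonal (star (d k i) * d k j) * (M k) := by
    intro k i j
    have hUZ : ∀ Z : Matrix (Fin N₂) (Fin N₂) ℂ, (U k)ᴴ * (U k * Z) = Z := by
      intro Z
      rw [← Matrix.mul_assoc, hUU k, Matrix.one_mul]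
    have hDZ : ∀ (p q : Fin N₂ → ℂ) (Z : Matrix (Fin N₂) (Fin N₂) ℂ),
        Matrix.diagonal p * (Matrix.diagonal q * Z) = Matrix.diagonal (p * q) * Z := by
      intro p q Z
      rw [← Matrix.mul_assoc, Matrix.diagonal_mul_diagonal]
      rfl
    rw [hrep k i, hrep k j, hM]
    simp only [Matrix.conjTranspose_mul, Matrix.conjTranspose_conjTranspose,
      Matrix.diagonal_conjTranspose, Matrix.mul_assoc, hUZ, hDZ]
  set P : Fin N₁ × Fin N₂ → Matrix (Fin N₁) (Fin N₁) ℂ :=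
    fun p => Matrix.of fun i j => star (d p.1 i p.2) * d p.1 j p.2 with hP
  set Q : Fin N₁ × Fin N₂ → Matrix (Fin N₂) (Fin N₂) ℂ :=
    fun p => Matrix.of fun b c => star (M p.1 p.2 b) * M p.1 p.2 c with hQ
  have hsum : Xᴴ * X = ∑ p : Fin N₁ × Fin N₂, P p ⊗ₖ Q p := by
    ext ⟨i, b⟩ ⟨j, c⟩
    rw [Matrix.mul_apply]
    simp only [Matrix.sum_apply, Matrix.kroneckerMap_apply, Matrix.conjTranspose_apply,
      hXdef, hP, hQ, Matrix.of_apply]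
    rw [Fintype.sum_prod_type, Fintype.sum_prod_type]
    dsimp only
    refine Finset.sum_congr rfl fun k _ => ?_
    show ((S k i * Y k)ᴴ * (S k j * Y k)) b c = _
    rw [key k i j, Matrix.mul_assoc, Matrix.mul_apply]
    refine Finset.sum_congr rfl fun a _ => ?_
    simp only [Matrix.diagonal_mul, Matrix.conjTranspose_apply, Pi.mul_apply, Pi.star_apply]
    ring
  refine ⟨N₁ * N₂, P ∘ finProdFinEquiv.symm, Q ∘ finProdFinEquiv.symm,
    fun t => psd_outer _, fun t => psd_outer _, ?_⟩
  calc Xᴴ * X = ∑ p : Fin N₁ × Fin N₂, P p ⊗ₖ Q p := hsum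
    _ = ∑ t : Fin (N₁ * N₂), (P ∘ finProdFinEquiv.symm) t ⊗ₖ (Q ∘ finProdFinEquiv.symm) t := by
      refine Fintype.sum_equiv finProdFinEquiv _ _ fun p => ?_
      simp
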